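/- Let λ > 0 and let f, g, h : (0,∞)² → ℝ be smooth. Suppose the pair (ψ, A) given by the saddle ansatz solves the magnetic Ginzburg–Landau system on ℝ⁴ \ (Π₁ ∪ Π₂). Then on (0,∞)², writing fⱼ = ∂_{rⱼ}f etc., the triple (f, g, h) satisfies: (i) f₁₁ + f₂₂ + f₁/r₁ + f₂/r₂ − f(1−g)²/r₁² − f(1−h)²/r₂² − (λ/2)(f² − 1)f = 0; (ii) g₁₁ + g₂₂ − g₁/r₁ + g₂/r₂ + f² − f²g = 0; (iii) h₁₁ + h₂₂ + h₁/r₁ − h₂/r₂ + f² − f²h = 0. -/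

import Mathlib

/- STATEMENT 2: if the saddle ansatz (ψ, A) built from (f, g, h) solves the
magnetic Ginzburg–Landau system off Π₁ ∪ Π₂, then (f, g, h) satisfies the
reduced system of PDEs in the (r₁, r₂) variables. -/

noncomputable section

open Complex MeasureTheory

/-- ℝ⁴ with the Euclidean structure. -/
abbrev R4 : Type := EuclideanSpace ℝ (Fin 4)

/-- Standard basis vectors of ℝ⁴. -/
def bvec (j : Fin 4) : R4 := EuclideanSpace.single j 1

/-- `j`-th partial derivative. -/
def pd {E : Type*} [NormedAddCommGroup E] [NormedSpace ℝ E]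
    (j : Fin 4) (f : R4 → E) (x : R4) : E :=
  fderiv ℝ f x (bvec j)

/-- Euclidean Laplacian Δf = Σⱼ ∂ⱼ∂ⱼ f. -/
def lap {E : Type*} [NormedAddCommGroup E] [NormedSpace ℝ E]
    (f : R4 → E) (x : R4) : E :=
  ∑ j, pd j (pd j f) x

/-- The covariant Laplacian Δ_A ψ = Δψ − i (div A) ψ − 2i Σⱼ Aⱼ ∂ⱼψ − |A|² ψ. -/
def covLap (A : R4 → R4) (ψ : R4 → ℂ) (x : R4) : ℂ :=
  lap ψ x - Complex.I * (↑(∑ j, pd j (fun y => A y j) x)) * ψ x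
    - 2 * Complex.I * ∑ j, (↑(A x j) : ℂ) * pd j ψ x
    - (↑(∑ j, (A x j) ^ 2) : ℂ) * ψ x

/-- (d*dA)ⱼ = −Σₖ ∂ₖ(∂ₖAⱼ − ∂ⱼAₖ). -/
def dStarDA (A : R4 → R4) (j : Fin 4) (x : R4) : ℝ :=
  - ∑ k, pd k (fun y => pd k (fun z => A z j) y - pd j (fun z => A z k) y) x

/-- First complex coordinate z₁ = x₁ + i y₁. -/
def z1 (x : R4) : ℂ := ⟨x 0, x 1⟩
/-- Second complex coordinate z₂ = x₂ + i y₂. -/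
def z2 (x : R4) : ℂ := ⟨x 2, x 3⟩
/-- r₁ = |z₁|. -/
def r1 (x : R4) : ℝ := ‖z1 x‖
/-- r₂ = |z₂|. -/
def r2 (x : R4) : ℝ := ‖z2 x‖

/-- Π₁ = {(z₁, 0)}. -/
def Pi1 : Set R4 := {x | x 2 = 0 ∧ x 3 = 0}
/-- Π₂ = {(0, z₂)}. -/
def Pi2 : Set R4 := {x | x 0 = 0 ∧ x 1 = 0}

/-- Partial derivative in the first variable. -/
def d1 (f : ℝ → ℝ → ℝ) (a b : ℝ) : ℝ := deriv (fun t => f t b) a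
/-- Partial derivative in the second variable. -/
def d2 (f : ℝ → ℝ → ℝ) (a b : ℝ) : ℝ := deriv (fun t => f a t) b

/-- The saddle ansatz ψ = f(r₁,r₂) e^{i(θ₁+θ₂)}. -/
def saddlePsi (f : ℝ → ℝ → ℝ) (x : R4) : ℂ :=
  (↑(f (r1 x) (r2 x)) : ℂ) * (z1 x / (↑(r1 x) : ℂ)) * (z2 x / (↑(r2 x) : ℂ))

/-- The saddle ansatz A = g(r₁,r₂) dθ₁ + h(r₁,r₂) dθ₂, as a vector field. -/
def saddleA (g h : ℝ → ℝ → ℝ) (x : R4) : R4 :=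
  (WithLp.equiv 2 (Fin 4 → ℝ)).symm
    ![ - g (r1 x) (r2 x) * x 1 / (r1 x) ^ 2,
       g (r1 x) (r2 x) * x 0 / (r1 x) ^ 2,
       - h (r1 x) (r2 x) * x 3 / (r2 x) ^ 2,
       h (r1 x) (r2 x) * x 2 / (r2 x) ^ 2 ]


/-! ### Infrastructure -/

namespace GLred

open Filter

/-- coordinate projection -/
def pr (i : Fin 4) : R4 →L[ℝ] ℝ := EuclideanSpace.proj i

@[simp] lemma pr_apply (i : Fin 4) (y : R4) : pr i y = y i := rfl

lemma bvec_apply (j i : Fin 4) : bvec j i = if j = i then 1 else 0 := by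
  simp [bvec, EuclideanSpace.single_apply, eq_comm]

@[simp] lemma bvec_00 : bvec 0 (0 : Fin 4) = 1 := by simp [bvec, EuclideanSpace.single_apply]
@[simp] lemma bvec_01 : bvec 0 (1 : Fin 4) = 0 := by simp [bvec, EuclideanSpace.single_apply]
@[simp] lemma bvec_02 : bvec 0 (2 : Fin 4) = 0 := by simp [bvec, EuclideanSpace.single_apply]
@[simp] lemma bvec_03 : bvec 0 (3 : Fin 4) = 0 := by simp [bvec, EuclideanSpace.single_apply]
@[simp] lemma bvec_10 : bvec 1 (0 : Fin 4) = 0 := by simp [bvec, EuclideanSpace.single_apply]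
@[simp] lemma bvec_11 : bvec 1 (1 : Fin 4) = 1 := by simp [bvec, EuclideanSpace.single_apply]
@[simp] lemma bvec_12 : bvec 1 (2 : Fin 4) = 0 := by simp [bvec, EuclideanSpace.single_apply]
@[simp] lemma bvec_13 : bvec 1 (3 : Fin 4) = 0 := by simp [bvec, EuclideanSpace.single_apply]
@[simp] lemma bvec_20 : bvec 2 (0 : Fin 4) = 0 := by simp [bvec, EuclideanSpace.single_apply]
@[simp] lemma bvec_21 : bvec 2 (1 : Fin 4) = 0 := by simp [bvec, EuclideanSpace.single_apply]
@[simp] lemma bvec_22 : bvec 2 (2 : Fin 4) = 1 := by simp [bvec, EuclideanSpace.single_apply]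
@[simp] lemma bvec_23 : bvec 2 (3 : Fin 4) = 0 := by simp [bvec, EuclideanSpace.single_apply]
@[simp] lemma bvec_30 : bvec 3 (0 : Fin 4) = 0 := by simp [bvec, EuclideanSpace.single_apply]
@[simp] lemma bvec_31 : bvec 3 (1 : Fin 4) = 0 := by simp [bvec, EuclideanSpace.single_apply]
@[simp] lemma bvec_32 : bvec 3 (2 : Fin 4) = 0 := by simp [bvec, EuclideanSpace.single_apply]
@[simp] lemma bvec_33 : bvec 3 (3 : Fin 4) = 1 := by simp [bvec, EuclideanSpace.single_apply]

lemma r1_eq (y : R4) : r1 y = Real.sqrt (y 0 * y 0 + y 1 * y 1) := by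
  simp [r1, z1, Complex.norm_def, Complex.normSq_mk]

lemma r2_eq (y : R4) : r2 y = Real.sqrt (y 2 * y 2 + y 3 * y 3) := by
  simp [r2, z2, Complex.norm_def, Complex.normSq_mk]

lemma r1_pos {y : R4} (hy : y ∉ Pi2) : 0 < r1 y := by
  have hz : z1 y ≠ 0 := by
    simp only [Pi2, Set.mem_setOf_eq, not_and_or] at hy
    intro hz
    have h0 := congrArg Complex.re hz
    have h1 := congrArg Complex.im hz
    simp [z1] at h0 h1
    tauto
  exact norm_pos_iff.mpr hz

lemma r2_pos {y : R4} (hy : y ∉ Pi1) : 0 < r2 y := by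
  have hz : z2 y ≠ 0 := by
    simp only [Pi1, Set.mem_setOf_eq, not_and_or] at hy
    intro hz
    have h0 := congrArg Complex.re hz
    have h1 := congrArg Complex.im hz
    simp [z2] at h0 h1
    tauto
  exact norm_pos_iff.mpr hz

lemma sq_r1 (y : R4) : y 0 * y 0 + y 1 * y 1 = r1 y * r1 y := by
  rw [r1_eq]
  rw [Real.mul_self_sqrt (add_nonneg (mul_self_nonneg _) (mul_self_nonneg _))]

lemma sq_r2 (y : R4) : y 2 * y 2 + y 3 * y 3 = r2 y * r2 y := by
  rw [r2_eq]
  rw [Real.mul_self_sqrt (add_nonneg (mul_self_nonneg _) (mul_self_nonneg _))]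

/-- derivative of r1 -/
def D1 (y : R4) : R4 →L[ℝ] ℝ := (r1 y)⁻¹ • ((y 0) • pr 0 + (y 1) • pr 1)
/-- derivative of r2 -/
def D2 (y : R4) : R4 →L[ℝ] ℝ := (r2 y)⁻¹ • ((y 2) • pr 2 + (y 3) • pr 3)

@[simp] lemma D1_apply (y v : R4) : D1 y v = (r1 y)⁻¹ * (y 0 * v 0 + y 1 * v 1) := by
  simp [D1]; ring

@[simp] lemma D2_apply (y v : R4) : D2 y v = (r2 y)⁻¹ * (y 2 * v 2 + y 3 * v 3) := by
  simp [D2]; ring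

lemma hasFDerivAt_r1 {y : R4} (h : 0 < r1 y) : HasFDerivAt r1 (D1 y) y := by
  have hq : HasFDerivAt (fun y : R4 => y 0 * y 0 + y 1 * y 1)
      ((y 0 • pr 0 + y 0 • pr 0) + (y 1 • pr 1 + y 1 • pr 1)) y :=
    (((pr 0).hasFDerivAt.mul (pr 0).hasFDerivAt).add
      ((pr 1).hasFDerivAt.mul (pr 1).hasFDerivAt))
  have hne : y 0 * y 0 + y 1 * y 1 ≠ 0 := by
    rw [sq_r1]; positivity
  have := hq.sqrt hne
  have heq : (fun y : R4 => Real.sqrt (y 0 * y 0 + y 1 * y 1)) = r1 := by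
    funext z; rw [r1_eq]
  rw [heq] at this
  refine this.congr_fderiv (Eq.symm ?_)
  ext v
  have hs : Real.sqrt (y 0 * y 0 + y 1 * y 1) = r1 y := (r1_eq y).symm
  simp [hs]
  field_simp
  ring

lemma hasFDerivAt_r2 {y : R4} (h : 0 < r2 y) : HasFDerivAt r2 (D2 y) y := by
  have hq : HasFDerivAt (fun y : R4 => y 2 * y 2 + y 3 * y 3)
      ((y 2 • pr 2 + y 2 • pr 2) + (y 3 • pr 3 + y 3 • pr 3)) y :=
    (((pr 2).hasFDerivAt.mul (pr 2).hasFDerivAt).add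
      (((pr 3).hasFDerivAt.mul (pr 3).hasFDerivAt)))
  have hne : y 2 * y 2 + y 3 * y 3 ≠ 0 := by
    rw [sq_r2]; positivity
  have := hq.sqrt hne
  have heq : (fun y : R4 => Real.sqrt (y 2 * y 2 + y 3 * y 3)) = r2 := by
    funext z; rw [r2_eq]
  rw [heq] at this
  refine this.congr_fderiv (Eq.symm ?_)
  ext v
  have hs : Real.sqrt (y 2 * y 2 + y 3 * y 3) = r2 y := (r2_eq y).symm
  simp [hs]
  field_simp
  ring

end GLred

namespace GLred

open Filter

/-- the open quadrant -/
def Q : Set (ℝ × ℝ) := Set.Ioi 0 ×ˢ Set.Ioi 0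

lemma Q_open : IsOpen Q := isOpen_Ioi.prod isOpen_Ioi

lemma mem_Q {a b : ℝ} (ha : 0 < a) (hb : 0 < b) : (a, b) ∈ Q := ⟨ha, hb⟩

/-- shorthand for smooth on the quadrant -/
def CDQ (K : ℝ → ℝ → ℝ) : Prop := ContDiffOn ℝ (⊤ : ℕ∞) (Function.uncurry K) Q

/-- radial composition -/
def Rd (K : ℝ → ℝ → ℝ) (y : R4) : ℝ := K (r1 y) (r2 y)

/-- candidate derivative of a radial function -/
def radCLM (y : R4) (p q : ℝ) : R4 →L[ℝ] ℝ := p • D1 y + q • D2 y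

@[simp] lemma radCLM_apply (y v : R4) (p q : ℝ) :
    radCLM y p q v = p * ((r1 y)⁻¹ * (y 0 * v 0 + y 1 * v 1))
      + q * ((r2 y)⁻¹ * (y 2 * v 2 + y 3 * v 3)) := by
  simp [radCLM]

lemma cdq_differentiableAt {K : ℝ → ℝ → ℝ} (hK : CDQ K) {a b : ℝ} (ha : 0 < a) (hb : 0 < b) :
    DifferentiableAt ℝ (Function.uncurry K) (a, b) :=
  (hK.contDiffAt (Q_open.mem_nhds (mem_Q ha hb))).differentiableAt (by simp)

lemma d1_eq_fderiv {K : ℝ → ℝ → ℝ} (hK : CDQ K) {a b : ℝ} (ha : 0 < a) (hb : 0 < b) :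
    d1 K a b = fderiv ℝ (Function.uncurry K) (a, b) (1, 0) := by
  have hd := cdq_differentiableAt hK ha hb
  have hcurve : HasDerivAt (fun t : ℝ => (t, b)) ((1 : ℝ), (0 : ℝ)) a := by
    exact (hasDerivAt_id a).prodMk (hasDerivAt_const a b)
  have := hd.hasFDerivAt.comp_hasDerivAt a hcurve
  exact this.deriv

lemma d2_eq_fderiv {K : ℝ → ℝ → ℝ} (hK : CDQ K) {a b : ℝ} (ha : 0 < a) (hb : 0 < b) :
    d2 K a b = fderiv ℝ (Function.uncurry K) (a, b) (0, 1) := by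
  have hd := cdq_differentiableAt hK ha hb
  have hcurve : HasDerivAt (fun t : ℝ => (a, t)) ((0 : ℝ), (1 : ℝ)) b :=
    (hasDerivAt_const b a).prodMk (hasDerivAt_id b)
  have := hd.hasFDerivAt.comp_hasDerivAt b hcurve
  exact this.deriv

/-- the chain rule for radial functions -/
lemma hasFDerivAt_Rd {K : ℝ → ℝ → ℝ} (hK : CDQ K) {y : R4}
    (h1 : 0 < r1 y) (h2 : 0 < r2 y) :
    HasFDerivAt (Rd K) (radCLM y (d1 K (r1 y) (r2 y)) (d2 K (r1 y) (r2 y))) y := by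
  have hd := cdq_differentiableAt hK h1 h2
  have hφ : HasFDerivAt (fun y : R4 => (r1 y, r2 y)) ((D1 y).prod (D2 y)) y :=
    (hasFDerivAt_r1 h1).prodMk (hasFDerivAt_r2 h2)
  have hcomp := hd.hasFDerivAt.comp y hφ
  have heq : (Function.uncurry K ∘ fun y : R4 => (r1 y, r2 y)) = Rd K := rfl
  rw [heq] at hcomp
  refine hcomp.congr_fderiv (Eq.symm ?_)
  set L := fderiv ℝ (Function.uncurry K) (r1 y, r2 y)
  ext v
  have hL : ∀ s t : ℝ, L (s, t) = s * L (1, 0) + t * L (0, 1) := by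
    intro s t
    have : (s, t) = s • ((1 : ℝ), (0 : ℝ)) + t • ((0 : ℝ), (1 : ℝ)) := by
      simp [Prod.ext_iff]
    rw [this, map_add, L.map_smul, L.map_smul]
    simp [smul_eq_mul]
  simp only [ContinuousLinearMap.comp_apply, ContinuousLinearMap.prod_apply]
  rw [hL]
  rw [d1_eq_fderiv hK h1 h2, d2_eq_fderiv hK h1 h2]
  simp [radCLM]
  ring

/-- d1 of a smooth function is smooth -/
lemma CDQ.d1 {K : ℝ → ℝ → ℝ} (hK : CDQ K) : CDQ (d1 K) := by
  have h1 : ContDiffOn ℝ (⊤ : ℕ∞) (fun p => fderiv ℝ (Function.uncurry K) p) Q := by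
    exact hK.fderiv_of_isOpen Q_open (by exact_mod_cast le_top)
  have h2 : ContDiffOn ℝ (⊤ : ℕ∞)
      (fun p => fderiv ℝ (Function.uncurry K) p ((1 : ℝ), (0 : ℝ))) Q :=
    h1.clm_apply contDiffOn_const
  refine h2.congr ?_
  rintro ⟨a, b⟩ ⟨ha, hb⟩
  exact d1_eq_fderiv hK ha hb

lemma CDQ.d2 {K : ℝ → ℝ → ℝ} (hK : CDQ K) : CDQ (d2 K) := by
  have h1 : ContDiffOn ℝ (⊤ : ℕ∞) (fun p => fderiv ℝ (Function.uncurry K) p) Q :=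
    hK.fderiv_of_isOpen Q_open (by exact_mod_cast le_top)
  have h2 : ContDiffOn ℝ (⊤ : ℕ∞)
      (fun p => fderiv ℝ (Function.uncurry K) p ((0 : ℝ), (1 : ℝ))) Q :=
    h1.clm_apply contDiffOn_const
  refine h2.congr ?_
  rintro ⟨a, b⟩ ⟨ha, hb⟩
  exact d2_eq_fderiv hK ha hb

/-- differentiability of sections -/
lemma diff_sec1 {K : ℝ → ℝ → ℝ} (hK : CDQ K) {a b : ℝ} (ha : 0 < a) (hb : 0 < b) :
    DifferentiableAt ℝ (fun t => K t b) a := by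
  have hd := cdq_differentiableAt hK ha hb
  have hcurve : DifferentiableAt ℝ (fun t : ℝ => (t, b)) a :=
    (differentiableAt_id.prodMk (differentiableAt_const b))
  exact hd.comp a hcurve

lemma diff_sec2 {K : ℝ → ℝ → ℝ} (hK : CDQ K) {a b : ℝ} (ha : 0 < a) (hb : 0 < b) :
    DifferentiableAt ℝ (fun t => K a t) b := by
  have hd := cdq_differentiableAt hK ha hb
  have hcurve : DifferentiableAt ℝ (fun t : ℝ => (a, t)) b :=
    ((differentiableAt_const a).prodMk differentiableAt_id)
  exact hd.comp b hcurve

end GLred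

namespace GLred

/-! ### CDQ closure -/

lemma CDQ.sub {K L : ℝ → ℝ → ℝ} (hK : CDQ K) (hL : CDQ L) :
    CDQ (fun s t => K s t - L s t) := ContDiffOn.sub hK hL

lemma CDQ_div_pow {K : ℝ → ℝ → ℝ} (hK : CDQ K) (m n : ℕ) :
    CDQ (fun s t => K s t / (s ^ m * t ^ n)) := by
  refine ContDiffOn.div hK ?_ ?_
  · exact ((contDiff_fst.pow m).mul (contDiff_snd.pow n)).contDiffOn
  · rintro ⟨s, t⟩ ⟨hs, ht⟩
    have hs' : (0:ℝ) < s := hs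
    have ht' : (0:ℝ) < t := ht
    positivity

/-! ### conversion lemmas for d1/d2 of quotients -/

lemma d1_div_pow {K : ℝ → ℝ → ℝ} (hK : CDQ K) (m n : ℕ) {a b : ℝ}
    (ha : 0 < a) (hb : 0 < b) :
    d1 (fun s t => K s t / (s ^ (m + 1) * t ^ n)) a b
      = d1 K a b / (a ^ (m + 1) * b ^ n) - (m + 1) * K a b / (a ^ (m + 2) * b ^ n) := by
  unfold d1
  have hden : DifferentiableAt ℝ (fun s : ℝ => s ^ (m + 1) * b ^ n) a := by fun_prop
  have hne : a ^ (m + 1) * b ^ n ≠ 0 := by positivity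
  rw [show (fun s => (fun s t => K s t / (s ^ (m + 1) * t ^ n)) s b)
      = fun s => K s b / (s ^ (m + 1) * b ^ n) from rfl]
  rw [deriv_fun_div (diff_sec1 hK ha hb) hden hne]
  have hd : deriv (fun s : ℝ => s ^ (m + 1) * b ^ n) a = (m + 1) * a ^ m * b ^ n := by
    rw [deriv_mul_const (by fun_prop)]
    simp [deriv_pow]
  rw [hd]
  have : deriv (fun s => K s b) a = d1 K a b := rfl
  rw [this]
  have ha' : a ≠ 0 := ne_of_gt ha
  have hb' : b ≠ 0 := ne_of_gt hb
  field_simp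
  ring

lemma d2_div_pow {K : ℝ → ℝ → ℝ} (hK : CDQ K) (m n : ℕ) {a b : ℝ}
    (ha : 0 < a) (hb : 0 < b) :
    d2 (fun s t => K s t / (s ^ m * t ^ (n + 1))) a b
      = d2 K a b / (a ^ m * b ^ (n + 1)) - (n + 1) * K a b / (a ^ m * b ^ (n + 2)) := by
  unfold d2
  have hden : DifferentiableAt ℝ (fun t : ℝ => a ^ m * t ^ (n + 1)) b := by fun_prop
  have hne : a ^ m * b ^ (n + 1) ≠ 0 := by positivity
  rw [show (fun t => (fun s t => K s t / (s ^ m * t ^ (n + 1))) a t)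
      = fun t => K a t / (a ^ m * t ^ (n + 1)) from rfl]
  rw [deriv_fun_div (diff_sec2 hK ha hb) hden hne]
  have hd : deriv (fun t : ℝ => a ^ m * t ^ (n + 1)) b = a ^ m * ((n + 1) * b ^ n) := by
    rw [deriv_const_mul _ (by fun_prop)]
    simp [deriv_pow]
  rw [hd]
  have : deriv (fun t => K a t) b = d2 K a b := rfl
  rw [this]
  have ha' : a ≠ 0 := ne_of_gt ha
  have hb' : b ≠ 0 := ne_of_gt hb
  field_simp
  ring

lemma d1_div_pow' {K : ℝ → ℝ → ℝ} (hK : CDQ K) (n : ℕ) {a b : ℝ}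
    (ha : 0 < a) (hb : 0 < b) :
    d1 (fun s t => K s t / t ^ n) a b = d1 K a b / b ^ n := by
  unfold d1
  rw [show (fun s => (fun s t => K s t / t ^ n) s b) = fun s => K s b / b ^ n from rfl]
  rw [deriv_div_const]

lemma d2_div_pow' {K : ℝ → ℝ → ℝ} (hK : CDQ K) (m : ℕ) {a b : ℝ}
    (ha : 0 < a) (hb : 0 < b) :
    d2 (fun s t => K s t / s ^ m) a b = d2 K a b / a ^ m := by
  unfold d2
  rw [show (fun t => (fun s t => K s t / s ^ m) a t) = fun t => K a t / a ^ m from rfl]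
  rw [deriv_div_const]

lemma d1_sub {K L : ℝ → ℝ → ℝ} (hK : CDQ K) (hL : CDQ L) {a b : ℝ}
    (ha : 0 < a) (hb : 0 < b) :
    d1 (fun s t => K s t - L s t) a b = d1 K a b - d1 L a b := by
  unfold d1
  rw [show (fun s => (fun s t => K s t - L s t) s b) = fun s => K s b - L s b from rfl]
  rw [deriv_fun_sub (diff_sec1 hK ha hb) (diff_sec1 hL ha hb)]

lemma d2_sub {K L : ℝ → ℝ → ℝ} (hK : CDQ K) (hL : CDQ L) {a b : ℝ}
    (ha : 0 < a) (hb : 0 < b) :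
    d2 (fun s t => K s t - L s t) a b = d2 K a b - d2 L a b := by
  unfold d2
  rw [show (fun t => (fun s t => K s t - L s t) a t) = fun t => K a t - L a t from rfl]
  rw [deriv_fun_sub (diff_sec2 hK ha hb) (diff_sec2 hL ha hb)]

end GLred

namespace GLred

/-! ### named radial functions -/

/-- g/s² -/
def G1 (g : ℝ → ℝ → ℝ) : ℝ → ℝ → ℝ := fun s t => g s t / s ^ 2
/-- h/t² -/
def H1 (h : ℝ → ℝ → ℝ) : ℝ → ℝ → ℝ := fun s t => h s t / t ^ 2
/-- f/(st) -/
def Fl (f : ℝ → ℝ → ℝ) : ℝ → ℝ → ℝ := fun s t => f s t / (s * t)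
/-- d1(Fl)/s -/
def K1 (f : ℝ → ℝ → ℝ) : ℝ → ℝ → ℝ :=
  fun s t => d1 f s t / (s ^ 2 * t) - f s t / (s ^ 3 * t)
/-- d2(Fl)/t -/
def K2 (f : ℝ → ℝ → ℝ) : ℝ → ℝ → ℝ :=
  fun s t => d2 f s t / (s * t ^ 2) - f s t / (s * t ^ 3)
/-- d1 g/s -/
def Ka (g : ℝ → ℝ → ℝ) : ℝ → ℝ → ℝ := fun s t => d1 g s t / s
/-- d2 g/(s²t) -/
def KA (g : ℝ → ℝ → ℝ) : ℝ → ℝ → ℝ := fun s t => d2 g s t / (s ^ 2 * t)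
/-- d1 h/(st²) -/
def KB (h : ℝ → ℝ → ℝ) : ℝ → ℝ → ℝ := fun s t => d1 h s t / (s * t ^ 2)
/-- d2 h/t -/
def Kb (h : ℝ → ℝ → ℝ) : ℝ → ℝ → ℝ := fun s t => d2 h s t / t


/-! ### complex machinery -/

/-- derivative of z1 -/
def CZ1 : R4 →L[ℝ] ℂ := (Complex.ofRealCLM.comp (pr 0)) + (pr 1).smulRight Complex.I
/-- derivative of z2 -/
def CZ2 : R4 →L[ℝ] ℂ := (Complex.ofRealCLM.comp (pr 2)) + (pr 3).smulRight Complex.I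

@[simp] lemma CZ1_apply (v : R4) : CZ1 v = (v 0 : ℂ) + (v 1 : ℂ) * Complex.I := by
  simp [CZ1, ContinuousLinearMap.smulRight_apply, smul_eq_mul]

@[simp] lemma CZ2_apply (v : R4) : CZ2 v = (v 2 : ℂ) + (v 3 : ℂ) * Complex.I := by
  simp [CZ2, ContinuousLinearMap.smulRight_apply, smul_eq_mul]

lemma z1_eq_CZ1 : z1 = ⇑CZ1 := by
  funext y
  rw [CZ1_apply, z1, Complex.mk_eq_add_mul_I]

lemma z2_eq_CZ2 : z2 = ⇑CZ2 := by
  funext y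
  rw [CZ2_apply, z2, Complex.mk_eq_add_mul_I]

lemma hasFDerivAt_z1 (y : R4) : HasFDerivAt z1 CZ1 y := by
  rw [z1_eq_CZ1]; exact CZ1.hasFDerivAt

lemma hasFDerivAt_z2 (y : R4) : HasFDerivAt z2 CZ2 y := by
  rw [z2_eq_CZ2]; exact CZ2.hasFDerivAt

/-- product of the complex coordinates -/
def W (y : R4) : ℂ := z1 y * z2 y

lemma hasFDerivAt_W (y : R4) : HasFDerivAt W (z1 y • CZ2 + z2 y • CZ1) y :=
  (hasFDerivAt_z1 y).mul (hasFDerivAt_z2 y)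

/-- the saddle wave function in radial-smul form -/
lemma saddlePsi_eq (f : ℝ → ℝ → ℝ) :
    saddlePsi f = fun y => Rd (Fl f) y • W y := by
  funext y
  simp only [saddlePsi, Rd, W, Fl, Complex.real_smul]
  push_cast
  rw [div_eq_mul_inv, div_eq_mul_inv, div_eq_mul_inv, mul_inv]
  ring

lemma pd_eq {E : Type*} [NormedAddCommGroup E] [NormedSpace ℝ E]
    {F : R4 → E} {L : R4 →L[ℝ] E} {x : R4} (hF : HasFDerivAt F L x) (j : Fin 4) :
    pd j F x = L (bvec j) := by
  rw [pd, hF.fderiv]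

/-! ### the open set U -/

/-- off the two planes -/
def U : Set R4 := {y | 0 < r1 y ∧ 0 < r2 y}

lemma continuous_r1 : Continuous r1 := by
  have : Continuous z1 := by rw [z1_eq_CZ1]; exact CZ1.continuous
  exact continuous_norm.comp this

lemma continuous_r2 : Continuous r2 := by
  have : Continuous z2 := by rw [z2_eq_CZ2]; exact CZ2.continuous
  exact continuous_norm.comp this

lemma U_open : IsOpen U := by
  have h1 : IsOpen (r1 ⁻¹' Set.Ioi 0) := isOpen_Ioi.preimage continuous_r1
  have h2 : IsOpen (r2 ⁻¹' Set.Ioi 0) := isOpen_Ioi.preimage continuous_r2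
  exact h1.inter h2

lemma mem_U_iff (y : R4) : y ∈ U ↔ y ∉ Pi1 ∪ Pi2 := by
  constructor
  · rintro ⟨h1, h2⟩ (hp | hp)
    · have : r2 y = 0 := by simp [r2, z2, hp.1, hp.2, Complex.norm_def, Complex.normSq_mk]
      linarith
    · have : r1 y = 0 := by simp [r1, z1, hp.1, hp.2, Complex.norm_def, Complex.normSq_mk]
      linarith
  · intro hy
    rw [Set.mem_union] at hy
    push_neg at hy
    exact ⟨r1_pos hy.2, r2_pos hy.1⟩

/-! ### components of the vector potential -/

lemma A_comp0 (g h : ℝ → ℝ → ℝ) :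
    (fun y => saddleA g h y 0) = fun y => -(Rd (G1 g) y * y 1) := by
  funext y
  simp only [saddleA, WithLp.equiv_symm_apply, PiLp.toLp_apply, Matrix.cons_val_zero, Rd, G1]
  ring

lemma A_comp1 (g h : ℝ → ℝ → ℝ) :
    (fun y => saddleA g h y 1) = fun y => Rd (G1 g) y * y 0 := by
  funext y
  simp only [saddleA, WithLp.equiv_symm_apply, PiLp.toLp_apply, Matrix.cons_val_one, Matrix.head_cons, Matrix.cons_val_zero, Rd, G1]
  ring

lemma A_comp2 (g h : ℝ → ℝ → ℝ) :
    (fun y => saddleA g h y 2) = fun y => -(Rd (H1 h) y * y 3) := by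
  funext y
  simp only [saddleA, WithLp.equiv_symm_apply, PiLp.toLp_apply, Rd,
    show ((2 : Fin 4) = ⟨2, by norm_num⟩) from rfl]
  norm_num [Matrix.cons_val_fin_one, H1]
  ring

lemma A_comp3 (g h : ℝ → ℝ → ℝ) :
    (fun y => saddleA g h y 3) = fun y => Rd (H1 h) y * y 2 := by
  funext y
  simp only [saddleA, WithLp.equiv_symm_apply, PiLp.toLp_apply, Rd,
    show ((3 : Fin 4) = ⟨3, by norm_num⟩) from rfl]
  norm_num [Matrix.cons_val_fin_one, H1]
  ring

end GLred

namespace GLred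

lemma d1_div_pow0 {K : ℝ → ℝ → ℝ} (n : ℕ) {a b : ℝ} :
    d1 (fun s t => K s t / (s ^ 0 * t ^ n)) a b = d1 K a b / (a ^ 0 * b ^ n) := by
  unfold d1
  simp only [pow_zero, one_mul]
  rw [deriv_div_const]

lemma d2_div_pow0 {K : ℝ → ℝ → ℝ} (m : ℕ) {a b : ℝ} :
    d2 (fun s t => K s t / (s ^ m * t ^ 0)) a b = d2 K a b / (a ^ m * b ^ 0) := by
  unfold d2
  simp only [pow_zero, mul_one]
  rw [deriv_div_const]

/-- generic derivative of a radial function times one coordinate -/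
lemma hasFDerivAt_Rd_mul {K : ℝ → ℝ → ℝ} (hK : CDQ K) (i : Fin 4) {y : R4}
    (h1 : 0 < r1 y) (h2 : 0 < r2 y) :
    HasFDerivAt (fun y : R4 => Rd K y * y i)
      (Rd K y • pr i + y i • radCLM y (d1 K (r1 y) (r2 y)) (d2 K (r1 y) (r2 y))) y :=
  (hasFDerivAt_Rd hK h1 h2).mul (pr i).hasFDerivAt

/-- generic derivative of a radial function times two coordinates -/
lemma hasFDerivAt_Rd_mul2 {K : ℝ → ℝ → ℝ} (hK : CDQ K) (i j : Fin 4) {y : R4}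
    (h1 : 0 < r1 y) (h2 : 0 < r2 y) :
    HasFDerivAt (fun y : R4 => Rd K y * (y i * y j))
      (Rd K y • (y i • pr j + y j • pr i)
        + (y i * y j) • radCLM y (d1 K (r1 y) (r2 y)) (d2 K (r1 y) (r2 y))) y :=
  (hasFDerivAt_Rd hK h1 h2).mul ((pr i).hasFDerivAt.mul (pr j).hasFDerivAt)

/-- the base point -/
def pt (a b : ℝ) : R4 := (WithLp.equiv 2 (Fin 4 → ℝ)).symm ![a, 0, b, 0]

@[simp] lemma pt_0 (a b : ℝ) : pt a b 0 = a := rfl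
@[simp] lemma pt_1 (a b : ℝ) : pt a b 1 = 0 := rfl
@[simp] lemma pt_2 (a b : ℝ) : pt a b 2 = b := rfl
@[simp] lemma pt_3 (a b : ℝ) : pt a b 3 = 0 := rfl

lemma r1_pt {a b : ℝ} (ha : 0 < a) : r1 (pt a b) = a := by
  rw [r1_eq]
  simp [Real.sqrt_mul_self ha.le]

lemma r2_pt {a b : ℝ} (hb : 0 < b) : r2 (pt a b) = b := by
  rw [r2_eq]
  simp [Real.sqrt_mul_self hb.le]

lemma pt_mem_U {a b : ℝ} (ha : 0 < a) (hb : 0 < b) : pt a b ∈ U := by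
  constructor
  · rw [r1_pt ha]; exact ha
  · rw [r2_pt hb]; exact hb

end GLred

namespace GLred

variable {f g h : ℝ → ℝ → ℝ}

/-! ### CDQ instances -/

lemma cdq_G1 (hg : CDQ g) : CDQ (G1 g) := by
  have hrw : GLred.G1 g = fun s t => g s t / (s ^ 2 * t ^ 0) := by
    funext s t; norm_num [GLred.G1]
  rw [hrw]; exact CDQ_div_pow hg 2 0

lemma cdq_H1 (hh : CDQ h) : CDQ (H1 h) := by
  have hrw : GLred.H1 h = fun s t => h s t / (s ^ 0 * t ^ 2) := by
    funext s t; norm_num [GLred.H1]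
  rw [hrw]; exact CDQ_div_pow hh 0 2

lemma cdq_Fl (hf : CDQ f) : CDQ (Fl f) := by
  have hrw : GLred.Fl f = fun s t => f s t / (s ^ 1 * t ^ 1) := by
    funext s t; norm_num [GLred.Fl]
  rw [hrw]; exact CDQ_div_pow hf 1 1

lemma cdq_K1 (hf : CDQ f) : CDQ (K1 f) := by
  have hrw : GLred.K1 f
      = fun s t => d1 f s t / (s ^ 2 * t ^ 1) - f s t / (s ^ 3 * t ^ 1) := by
    funext s t; norm_num [GLred.K1]
  rw [hrw]; exact (CDQ_div_pow hf.d1 2 1).sub (CDQ_div_pow hf 3 1)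

lemma cdq_K2 (hf : CDQ f) : CDQ (K2 f) := by
  have hrw : GLred.K2 f
      = fun s t => d2 f s t / (s ^ 1 * t ^ 2) - f s t / (s ^ 1 * t ^ 3) := by
    funext s t; norm_num [GLred.K2]
  rw [hrw]; exact (CDQ_div_pow hf.d2 1 2).sub (CDQ_div_pow hf 1 3)

lemma cdq_Ka (hg : CDQ g) : CDQ (Ka g) := by
  have hrw : GLred.Ka g = fun s t => d1 g s t / (s ^ 1 * t ^ 0) := by
    funext s t; norm_num [GLred.Ka]
  rw [hrw]; exact CDQ_div_pow hg.d1 1 0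

lemma cdq_KA (hg : CDQ g) : CDQ (KA g) := by
  have hrw : GLred.KA g = fun s t => d2 g s t / (s ^ 2 * t ^ 1) := by
    funext s t; norm_num [GLred.KA]
  rw [hrw]; exact CDQ_div_pow hg.d2 2 1

lemma cdq_KB (hh : CDQ h) : CDQ (KB h) := by
  have hrw : GLred.KB h = fun s t => d1 h s t / (s ^ 1 * t ^ 2) := by
    funext s t; norm_num [GLred.KB]
  rw [hrw]; exact CDQ_div_pow hh.d1 1 2

lemma cdq_Kb (hh : CDQ h) : CDQ (Kb h) := by
  have hrw : GLred.Kb h = fun s t => d2 h s t / (s ^ 0 * t ^ 1) := by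
    funext s t; norm_num [GLred.Kb]
  rw [hrw]; exact CDQ_div_pow hh.d2 0 1

/-! ### derivative values of the named functions -/

lemma d1_G1 (hg : CDQ g) {a b : ℝ} (ha : 0 < a) (hb : 0 < b) :
    d1 (G1 g) a b = d1 g a b / a ^ 2 - 2 * g a b / a ^ 3 := by
  have hrw : GLred.G1 g = fun s t => g s t / (s ^ (1 + 1) * t ^ 0) := by
    funext s t; norm_num [GLred.G1]
  rw [hrw, d1_div_pow hg 1 0 ha hb]
  norm_num

lemma d2_G1 (hg : CDQ g) {a b : ℝ} (ha : 0 < a) (hb : 0 < b) :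
    d2 (G1 g) a b = d2 g a b / a ^ 2 := by
  have hrw : GLred.G1 g = fun s t => g s t / (s ^ 2 * t ^ 0) := by
    funext s t; norm_num [GLred.G1]
  rw [hrw, d2_div_pow0 2]
  norm_num

lemma d1_H1 (hh : CDQ h) {a b : ℝ} (ha : 0 < a) (hb : 0 < b) :
    d1 (H1 h) a b = d1 h a b / b ^ 2 := by
  have hrw : GLred.H1 h = fun s t => h s t / (s ^ 0 * t ^ 2) := by
    funext s t; norm_num [GLred.H1]
  rw [hrw, d1_div_pow0 2]
  norm_num

lemma d2_H1 (hh : CDQ h) {a b : ℝ} (ha : 0 < a) (hb : 0 < b) :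
    d2 (H1 h) a b = d2 h a b / b ^ 2 - 2 * h a b / b ^ 3 := by
  have hrw : GLred.H1 h = fun s t => h s t / (s ^ 0 * t ^ (1 + 1)) := by
    funext s t; norm_num [GLred.H1]
  rw [hrw, d2_div_pow hh 0 1 ha hb]
  norm_num

lemma d1_Fl (hf : CDQ f) {a b : ℝ} (ha : 0 < a) (hb : 0 < b) :
    d1 (Fl f) a b = d1 f a b / (a * b) - f a b / (a ^ 2 * b) := by
  have hrw : GLred.Fl f = fun s t => f s t / (s ^ (0 + 1) * t ^ 1) := by
    funext s t; norm_num [GLred.Fl]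
  rw [hrw, d1_div_pow hf 0 1 ha hb]
  norm_num [pow_one]

lemma d2_Fl (hf : CDQ f) {a b : ℝ} (ha : 0 < a) (hb : 0 < b) :
    d2 (Fl f) a b = d2 f a b / (a * b) - f a b / (a * b ^ 2) := by
  have hrw : GLred.Fl f = fun s t => f s t / (s ^ 1 * t ^ (0 + 1)) := by
    funext s t; norm_num [GLred.Fl]
  rw [hrw, d2_div_pow hf 1 0 ha hb]
  norm_num [pow_one]

lemma d1_Ka (hg : CDQ g) {a b : ℝ} (ha : 0 < a) (hb : 0 < b) :
    d1 (Ka g) a b = d1 (d1 g) a b / a - d1 g a b / a ^ 2 := by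
  have hrw : GLred.Ka g = fun s t => d1 g s t / (s ^ (0 + 1) * t ^ 0) := by
    funext s t; norm_num [GLred.Ka]
  rw [hrw, d1_div_pow hg.d1 0 0 ha hb]
  norm_num [pow_one]

lemma d2_KA (hg : CDQ g) {a b : ℝ} (ha : 0 < a) (hb : 0 < b) :
    d2 (KA g) a b = d2 (d2 g) a b / (a ^ 2 * b) - d2 g a b / (a ^ 2 * b ^ 2) := by
  have hrw : GLred.KA g = fun s t => d2 g s t / (s ^ 2 * t ^ (0 + 1)) := by
    funext s t; norm_num [GLred.KA]
  rw [hrw, d2_div_pow hg.d2 2 0 ha hb]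
  norm_num [pow_one]

lemma d1_KB (hh : CDQ h) {a b : ℝ} (ha : 0 < a) (hb : 0 < b) :
    d1 (KB h) a b = d1 (d1 h) a b / (a * b ^ 2) - d1 h a b / (a ^ 2 * b ^ 2) := by
  have hrw : GLred.KB h = fun s t => d1 h s t / (s ^ (0 + 1) * t ^ 2) := by
    funext s t; norm_num [GLred.KB]
  rw [hrw, d1_div_pow hh.d1 0 2 ha hb]
  norm_num [pow_one]

lemma d2_Kb (hh : CDQ h) {a b : ℝ} (ha : 0 < a) (hb : 0 < b) :
    d2 (Kb h) a b = d2 (d2 h) a b / b - d2 h a b / b ^ 2 := by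
  have hrw : GLred.Kb h = fun s t => d2 h s t / (s ^ 0 * t ^ (0 + 1)) := by
    funext s t; norm_num [GLred.Kb]
  rw [hrw, d2_div_pow hh.d2 0 0 ha hb]
  norm_num [pow_one]

lemma d1_K1 (hf : CDQ f) {a b : ℝ} (ha : 0 < a) (hb : 0 < b) :
    d1 (K1 f) a b = d1 (d1 f) a b / (a ^ 2 * b) - 3 * d1 f a b / (a ^ 3 * b)
      + 3 * f a b / (a ^ 4 * b) := by
  have hrw : GLred.K1 f
      = fun s t => d1 f s t / (s ^ (1 + 1) * t ^ 1) - f s t / (s ^ (2 + 1) * t ^ 1) := by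
    funext s t; norm_num [GLred.K1, pow_one]
  rw [hrw, d1_sub (CDQ_div_pow hf.d1 2 1) (CDQ_div_pow hf 3 1) ha hb,
    d1_div_pow hf.d1 1 1 ha hb, d1_div_pow hf 2 1 ha hb]
  have ha' : a ≠ 0 := ne_of_gt ha
  have hb' : b ≠ 0 := ne_of_gt hb
  field_simp
  ring

lemma d2_K2 (hf : CDQ f) {a b : ℝ} (ha : 0 < a) (hb : 0 < b) :
    d2 (K2 f) a b = d2 (d2 f) a b / (a * b ^ 2) - 3 * d2 f a b / (a * b ^ 3)
      + 3 * f a b / (a * b ^ 4) := by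
  have hrw : GLred.K2 f
      = fun s t => d2 f s t / (s ^ 1 * t ^ (1 + 1)) - f s t / (s ^ 1 * t ^ (2 + 1)) := by
    funext s t; norm_num [GLred.K2, pow_one]
  rw [hrw, d2_sub (CDQ_div_pow hf.d2 1 2) (CDQ_div_pow hf 1 3) ha hb,
    d2_div_pow hf.d2 1 1 ha hb, d2_div_pow hf 1 2 ha hb]
  have ha' : a ≠ 0 := ne_of_gt ha
  have hb' : b ≠ 0 := ne_of_gt hb
  field_simp
  ring

/-! ### first-level conversions -/

lemma conv_K1 (hf : CDQ f) {s t : ℝ} (hs : 0 < s) (ht : 0 < t) :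
    d1 (Fl f) s t / s = K1 f s t := by
  rw [d1_Fl hf hs ht]
  have hs' : s ≠ 0 := ne_of_gt hs
  have ht' : t ≠ 0 := ne_of_gt ht
  simp only [K1]
  field_simp

lemma conv_K2 (hf : CDQ f) {s t : ℝ} (hs : 0 < s) (ht : 0 < t) :
    d2 (Fl f) s t / t = K2 f s t := by
  rw [d2_Fl hf hs ht]
  have hs' : s ≠ 0 := ne_of_gt hs
  have ht' : t ≠ 0 := ne_of_gt ht
  simp only [K2]
  field_simp

lemma conv_Ka (hg : CDQ g) {s t : ℝ} (hs : 0 < s) (ht : 0 < t) :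
    s * d1 (G1 g) s t + 2 * G1 g s t = Ka g s t := by
  rw [d1_G1 hg hs ht]
  have hs' : s ≠ 0 := ne_of_gt hs
  simp only [G1, Ka]
  field_simp
  ring

lemma conv_Kb (hh : CDQ h) {s t : ℝ} (hs : 0 < s) (ht : 0 < t) :
    t * d2 (H1 h) s t + 2 * H1 h s t = Kb h s t := by
  rw [d2_H1 hh hs ht]
  have ht' : t ≠ 0 := ne_of_gt ht
  simp only [H1, Kb]
  field_simp
  ring

lemma conv_KA (hg : CDQ g) {s t : ℝ} (hs : 0 < s) (ht : 0 < t) :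
    d2 (G1 g) s t / t = KA g s t := by
  rw [d2_G1 hg hs ht]
  simp only [KA]
  rw [div_div]

lemma conv_KB (hh : CDQ h) {s t : ℝ} (hs : 0 < s) (ht : 0 < t) :
    d1 (H1 h) s t / s = KB h s t := by
  rw [d1_H1 hh hs ht]
  have hs' : s ≠ 0 := ne_of_gt hs
  have ht' : t ≠ 0 := ne_of_gt ht
  simp only [KB]
  rw [div_div]
  ring_nf

end GLred

namespace GLred

/-! ### derivatives of the components of A on U -/

lemma hasFDerivAt_A0 (g h : ℝ → ℝ → ℝ) (hg : CDQ g) {y : R4} (hy : y ∈ U) :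
    HasFDerivAt (fun y : R4 => saddleA g h y 0)
      (-(Rd (G1 g) y • pr 1
        + y 1 • radCLM y (d1 (G1 g) (r1 y) (r2 y)) (d2 (G1 g) (r1 y) (r2 y)))) y := by
  rw [A_comp0]
  exact (hasFDerivAt_Rd_mul (cdq_G1 hg) 1 hy.1 hy.2).neg

lemma hasFDerivAt_A1 (g h : ℝ → ℝ → ℝ) (hg : CDQ g) {y : R4} (hy : y ∈ U) :
    HasFDerivAt (fun y : R4 => saddleA g h y 1)
      (Rd (G1 g) y • pr 0
        + y 0 • radCLM y (d1 (G1 g) (r1 y) (r2 y)) (d2 (G1 g) (r1 y) (r2 y))) y := by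
  rw [A_comp1]
  exact hasFDerivAt_Rd_mul (cdq_G1 hg) 0 hy.1 hy.2

lemma hasFDerivAt_A2 (g h : ℝ → ℝ → ℝ) (hh : CDQ h) {y : R4} (hy : y ∈ U) :
    HasFDerivAt (fun y : R4 => saddleA g h y 2)
      (-(Rd (H1 h) y • pr 3
        + y 3 • radCLM y (d1 (H1 h) (r1 y) (r2 y)) (d2 (H1 h) (r1 y) (r2 y)))) y := by
  rw [A_comp2]
  exact (hasFDerivAt_Rd_mul (cdq_H1 hh) 3 hy.1 hy.2).neg

lemma hasFDerivAt_A3 (g h : ℝ → ℝ → ℝ) (hh : CDQ h) {y : R4} (hy : y ∈ U) :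
    HasFDerivAt (fun y : R4 => saddleA g h y 3)
      (Rd (H1 h) y • pr 2
        + y 2 • radCLM y (d1 (H1 h) (r1 y) (r2 y)) (d2 (H1 h) (r1 y) (r2 y))) y := by
  rw [A_comp3]
  exact hasFDerivAt_Rd_mul (cdq_H1 hh) 2 hy.1 hy.2

/-! ### derivative of psi on U -/

/-- the derivative of the saddle wave function -/
def Dpsi (f : ℝ → ℝ → ℝ) (y : R4) : R4 →L[ℝ] ℂ :=
  Rd (Fl f) y • (z1 y • CZ2 + z2 y • CZ1)
    + (radCLM y (d1 (Fl f) (r1 y) (r2 y)) (d2 (Fl f) (r1 y) (r2 y))).smulRight (W y)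

lemma hasFDerivAt_psi (f : ℝ → ℝ → ℝ) (hf : CDQ f) {y : R4} (hy : y ∈ U) :
    HasFDerivAt (saddlePsi f) (Dpsi f y) y := by
  rw [saddlePsi_eq]
  exact (hasFDerivAt_Rd (cdq_Fl hf) hy.1 hy.2).smul (hasFDerivAt_W y)

/-! ### formulas for the first partials of psi -/

/-- formula for ∂₀ψ -/
def Psi0 (f : ℝ → ℝ → ℝ) (y : R4) : ℂ := Rd (Fl f) y • z2 y + (Rd (K1 f) y * y 0) • W y
/-- formula for ∂₁ψ -/
def Psi1 (f : ℝ → ℝ → ℝ) (y : R4) : ℂ :=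
  Rd (Fl f) y • (z2 y * Complex.I) + (Rd (K1 f) y * y 1) • W y
/-- formula for ∂₂ψ -/
def Psi2 (f : ℝ → ℝ → ℝ) (y : R4) : ℂ := Rd (Fl f) y • z1 y + (Rd (K2 f) y * y 2) • W y
/-- formula for ∂₃ψ -/
def Psi3 (f : ℝ → ℝ → ℝ) (y : R4) : ℂ :=
  Rd (Fl f) y • (z1 y * Complex.I) + (Rd (K2 f) y * y 3) • W y

lemma pd_psi0 (f : ℝ → ℝ → ℝ) (hf : CDQ f) {y : R4} (hy : y ∈ U) :
    pd 0 (saddlePsi f) y = Psi0 f y := by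
  rw [pd_eq (hasFDerivAt_psi f hf hy) 0]
  have hc : d1 (Fl f) (r1 y) (r2 y) / r1 y = K1 f (r1 y) (r2 y) := conv_K1 hf hy.1 hy.2
  simp only [Dpsi, Psi0, ContinuousLinearMap.add_apply, ContinuousLinearMap.smul_apply,
    ContinuousLinearMap.smulRight_apply, radCLM_apply, CZ1_apply, CZ2_apply]
  norm_num [Rd]
  rw [← hc]
  left
  push_cast
  ring

lemma pd_psi1 (f : ℝ → ℝ → ℝ) (hf : CDQ f) {y : R4} (hy : y ∈ U) :
    pd 1 (saddlePsi f) y = Psi1 f y := by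
  rw [pd_eq (hasFDerivAt_psi f hf hy) 1]
  have hc : d1 (Fl f) (r1 y) (r2 y) / r1 y = K1 f (r1 y) (r2 y) := conv_K1 hf hy.1 hy.2
  simp only [Dpsi, Psi1, ContinuousLinearMap.add_apply, ContinuousLinearMap.smul_apply,
    ContinuousLinearMap.smulRight_apply, radCLM_apply, CZ1_apply, CZ2_apply]
  norm_num [Rd]
  rw [← hc]
  left
  push_cast
  ring

lemma pd_psi2 (f : ℝ → ℝ → ℝ) (hf : CDQ f) {y : R4} (hy : y ∈ U) :
    pd 2 (saddlePsi f) y = Psi2 f y := by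
  rw [pd_eq (hasFDerivAt_psi f hf hy) 2]
  have hc : d2 (Fl f) (r1 y) (r2 y) / r2 y = K2 f (r1 y) (r2 y) := conv_K2 hf hy.1 hy.2
  simp only [Dpsi, Psi2, ContinuousLinearMap.add_apply, ContinuousLinearMap.smul_apply,
    ContinuousLinearMap.smulRight_apply, radCLM_apply, CZ1_apply, CZ2_apply]
  norm_num [Rd]
  rw [← hc]
  left
  push_cast
  ring

lemma pd_psi3 (f : ℝ → ℝ → ℝ) (hf : CDQ f) {y : R4} (hy : y ∈ U) :
    pd 3 (saddlePsi f) y = Psi3 f y := by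
  rw [pd_eq (hasFDerivAt_psi f hf hy) 3]
  have hc : d2 (Fl f) (r1 y) (r2 y) / r2 y = K2 f (r1 y) (r2 y) := conv_K2 hf hy.1 hy.2
  simp only [Dpsi, Psi3, ContinuousLinearMap.add_apply, ContinuousLinearMap.smul_apply,
    ContinuousLinearMap.smulRight_apply, radCLM_apply, CZ1_apply, CZ2_apply]
  norm_num [Rd]
  rw [← hc]
  left
  push_cast
  ring

/-! ### values at the base point -/

lemma z1_pt {a b : ℝ} : z1 (pt a b) = (a : ℂ) := by
  apply Complex.ext <;> simp [z1]

lemma z2_pt {a b : ℝ} : z2 (pt a b) = (b : ℂ) := by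
  apply Complex.ext <;> simp [z2]

lemma psi_pt (f : ℝ → ℝ → ℝ) {a b : ℝ} (ha : 0 < a) (hb : 0 < b) :
    saddlePsi f (pt a b) = ((f a b : ℝ) : ℂ) := by
  rw [saddlePsi, z1_pt, z2_pt, r1_pt ha, r2_pt hb]
  have ha' : (a : ℂ) ≠ 0 := by exact_mod_cast ne_of_gt ha
  have hb' : (b : ℂ) ≠ 0 := by exact_mod_cast ne_of_gt hb
  rw [div_self ha', div_self hb']
  ring

lemma W_pt {a b : ℝ} : W (pt a b) = ((a : ℂ) * (b : ℂ)) := by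
  rw [W, z1_pt, z2_pt]

end GLred

namespace GLred

lemma pd_congr_nhds {E : Type*} [NormedAddCommGroup E] [NormedSpace ℝ E]
    {F G : R4 → E} {x : R4} (hev : F =ᶠ[nhds x] G) (j : Fin 4) :
    pd j F x = pd j G x := by
  rw [pd, pd, hev.fderiv_eq]

lemma eq_g (f g h : ℝ → ℝ → ℝ) (hf : CDQ f) (hg : CDQ g) (hh : CDQ h)
    (heq2 : ∀ x : R4, x ∉ Pi1 ∪ Pi2 → ∀ j : Fin 4,
      dStarDA (saddleA g h) j x =
        ((pd j (saddlePsi f) x - Complex.I * (↑(saddleA g h x j)) * saddlePsi f x)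
          * (starRingEnd ℂ) (saddlePsi f x)).im)
    {a b : ℝ} (ha : 0 < a) (hb : 0 < b) :
    d1 (d1 g) a b + d2 (d2 g) a b - d1 g a b / a + d2 g a b / b
      + (f a b) ^ 2 - (f a b) ^ 2 * g a b = 0 := by
  have hx : pt a b ∈ U := pt_mem_U ha hb
  have hr1 : r1 (pt a b) = a := r1_pt ha
  have hr2 : r2 (pt a b) = b := r2_pt hb
  have ha' : a ≠ 0 := ne_of_gt ha
  have hb' : b ≠ 0 := ne_of_gt hb
  have e := heq2 (pt a b) ((mem_U_iff _).1 hx) 1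
  rw [dStarDA, Fin.sum_univ_four] at e
  -- term k = 0
  have hev0 : (fun y => pd 0 (fun z => saddleA g h z 1) y
      - pd 1 (fun z => saddleA g h z 0) y) =ᶠ[nhds (pt a b)] Rd (Ka g) := by
    filter_upwards [U_open.mem_nhds hx] with y hy
    rw [pd_eq (hasFDerivAt_A1 g h hg hy) 0, pd_eq (hasFDerivAt_A0 g h hg hy) 1]
    simp only [ContinuousLinearMap.add_apply, ContinuousLinearMap.smul_apply,
      ContinuousLinearMap.neg_apply, radCLM_apply, pr_apply, smul_eq_mul,
      bvec_00, bvec_01, bvec_02, bvec_03, bvec_10, bvec_11, bvec_12, bvec_13]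
    simp only [Rd]
    rw [← conv_Ka hg hy.1 hy.2]
    have hs := sq_r1 y
    have h1 : r1 y ≠ 0 := ne_of_gt hy.1
    field_simp
    linear_combination d1 (G1 g) (r1 y) (r2 y) * hs
  have T0 : pd 0 (fun y => pd 0 (fun z => saddleA g h z 1) y
      - pd 1 (fun z => saddleA g h z 0) y) (pt a b) = d1 (Ka g) a b := by
    rw [pd_congr_nhds hev0 0, pd_eq (hasFDerivAt_Rd (cdq_Ka hg) hx.1 hx.2) 0]
    simp only [radCLM_apply, hr1, hr2, pt_0, pt_1, pt_2, pt_3,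
      bvec_00, bvec_01, bvec_02, bvec_03]
    field_simp
    ring
  -- term k = 1
  have T1 : pd 1 (fun y => pd 1 (fun z => saddleA g h z 1) y
      - pd 1 (fun z => saddleA g h z 1) y) (pt a b) = 0 := by
    have h11 : (fun y => pd 1 (fun z => saddleA g h z 1) y
        - pd 1 (fun z => saddleA g h z 1) y) = (fun _ : R4 => (0 : ℝ)) :=
      funext fun y => sub_self _
    rw [h11]
    simp [pd]
  -- term k = 2
  have hev2 : (fun y => pd 2 (fun z => saddleA g h z 1) y
      - pd 1 (fun z => saddleA g h z 2) y) =ᶠ[nhds (pt a b)]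
      (fun y => Rd (KA g) y * (y 0 * y 2) + Rd (KB h) y * (y 1 * y 3)) := by
    filter_upwards [U_open.mem_nhds hx] with y hy
    rw [pd_eq (hasFDerivAt_A1 g h hg hy) 2, pd_eq (hasFDerivAt_A2 g h hh hy) 1]
    simp only [ContinuousLinearMap.add_apply, ContinuousLinearMap.smul_apply,
      ContinuousLinearMap.neg_apply, radCLM_apply, pr_apply, smul_eq_mul,
      bvec_20, bvec_21, bvec_22, bvec_23, bvec_10, bvec_11, bvec_12, bvec_13, Rd]
    rw [← conv_KA hg hy.1 hy.2, ← conv_KB hh hy.1 hy.2]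
    ring
  have T2 : pd 2 (fun y => pd 2 (fun z => saddleA g h z 1) y
      - pd 1 (fun z => saddleA g h z 2) y) (pt a b)
      = KA g a b * a + a * b * d2 (KA g) a b := by
    rw [pd_congr_nhds hev2 2,
      pd_eq ((hasFDerivAt_Rd_mul2 (cdq_KA hg) 0 2 hx.1 hx.2).fun_add
        (hasFDerivAt_Rd_mul2 (cdq_KB hh) 1 3 hx.1 hx.2)) 2]
    simp only [ContinuousLinearMap.add_apply, ContinuousLinearMap.smul_apply,
      radCLM_apply, pr_apply, smul_eq_mul, hr1, hr2, pt_0, pt_1, pt_2, pt_3,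
      bvec_20, bvec_21, bvec_22, bvec_23, Rd]
    field_simp
    ring
  -- term k = 3
  have hev3 : (fun y => pd 3 (fun z => saddleA g h z 1) y
      - pd 1 (fun z => saddleA g h z 3) y) =ᶠ[nhds (pt a b)]
      (fun y => Rd (KA g) y * (y 0 * y 3) - Rd (KB h) y * (y 1 * y 2)) := by
    filter_upwards [U_open.mem_nhds hx] with y hy
    rw [pd_eq (hasFDerivAt_A1 g h hg hy) 3, pd_eq (hasFDerivAt_A3 g h hh hy) 1]
    simp only [ContinuousLinearMap.add_apply, ContinuousLinearMap.smul_apply,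
      ContinuousLinearMap.neg_apply, radCLM_apply, pr_apply, smul_eq_mul,
      bvec_30, bvec_31, bvec_32, bvec_33, bvec_10, bvec_11, bvec_12, bvec_13, Rd]
    rw [← conv_KA hg hy.1 hy.2, ← conv_KB hh hy.1 hy.2]
    ring
  have T3 : pd 3 (fun y => pd 3 (fun z => saddleA g h z 1) y
      - pd 1 (fun z => saddleA g h z 3) y) (pt a b) = KA g a b * a := by
    rw [pd_congr_nhds hev3 3,
      pd_eq ((hasFDerivAt_Rd_mul2 (cdq_KA hg) 0 3 hx.1 hx.2).fun_sub
        (hasFDerivAt_Rd_mul2 (cdq_KB hh) 1 2 hx.1 hx.2)) 3]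
    simp only [ContinuousLinearMap.add_apply, ContinuousLinearMap.sub_apply,
      ContinuousLinearMap.smul_apply, radCLM_apply, pr_apply, smul_eq_mul,
      hr1, hr2, pt_0, pt_1, pt_2, pt_3, bvec_30, bvec_31, bvec_32, bvec_33, Rd]
    field_simp
    ring
  rw [T0, T1, T2, T3] at e
  -- right-hand side
  have hA1v : saddleA g h (pt a b) 1 = g a b / a ^ 2 * a := by
    have h' := congrFun (A_comp1 g h) (pt a b)
    simp only at h'
    rw [h', Rd, hr1, hr2, pt_0, G1]
  have hpsi1 : pd 1 (saddlePsi f) (pt a b) = (Fl f a b : ℝ) • ((b : ℂ) * Complex.I) := by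
    rw [pd_psi1 f hf hx]
    simp [Psi1, Rd, hr1, hr2, z2_pt]
  rw [hpsi1, hA1v, psi_pt f ha hb, Complex.conj_ofReal] at e
  simp only [Complex.real_smul, Complex.sub_im, Complex.mul_im, Complex.mul_re,
    Complex.ofReal_re, Complex.ofReal_im, Complex.I_re, Complex.I_im] at e
  -- substitute the derivative values
  rw [d1_Ka hg ha hb, d2_KA hg ha hb] at e
  simp only [KA, Fl] at e
  linear_combination (norm := (field_simp; ring)) (-(a : ℝ)) * e
end GLred

namespace GLred

lemma eq_h (f g h : ℝ → ℝ → ℝ) (hf : CDQ f) (hg : CDQ g) (hh : CDQ h)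
    (heq2 : ∀ x : R4, x ∉ Pi1 ∪ Pi2 → ∀ j : Fin 4,
      dStarDA (saddleA g h) j x =
        ((pd j (saddlePsi f) x - Complex.I * (↑(saddleA g h x j)) * saddlePsi f x)
          * (starRingEnd ℂ) (saddlePsi f x)).im)
    {a b : ℝ} (ha : 0 < a) (hb : 0 < b) :
    d1 (d1 h) a b + d2 (d2 h) a b + d1 h a b / a - d2 h a b / b
      + (f a b) ^ 2 - (f a b) ^ 2 * h a b = 0 := by
  have hx : pt a b ∈ U := pt_mem_U ha hb
  have hr1 : r1 (pt a b) = a := r1_pt ha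
  have hr2 : r2 (pt a b) = b := r2_pt hb
  have ha' : a ≠ 0 := ne_of_gt ha
  have hb' : b ≠ 0 := ne_of_gt hb
  have e := heq2 (pt a b) ((mem_U_iff _).1 hx) 3
  rw [dStarDA, Fin.sum_univ_four] at e
  -- term k = 0
  have hev0 : (fun y => pd 0 (fun z => saddleA g h z 3) y
      - pd 3 (fun z => saddleA g h z 0) y) =ᶠ[nhds (pt a b)]
      (fun y => Rd (KB h) y * (y 0 * y 2) + Rd (KA g) y * (y 1 * y 3)) := by
    filter_upwards [U_open.mem_nhds hx] with y hy
    rw [pd_eq (hasFDerivAt_A3 g h hh hy) 0, pd_eq (hasFDerivAt_A0 g h hg hy) 3]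
    simp only [ContinuousLinearMap.add_apply, ContinuousLinearMap.smul_apply,
      ContinuousLinearMap.neg_apply, radCLM_apply, pr_apply, smul_eq_mul,
      bvec_00, bvec_01, bvec_02, bvec_03, bvec_30, bvec_31, bvec_32, bvec_33, Rd]
    rw [← conv_KA hg hy.1 hy.2, ← conv_KB hh hy.1 hy.2]
    ring
  have T0 : pd 0 (fun y => pd 0 (fun z => saddleA g h z 3) y
      - pd 3 (fun z => saddleA g h z 0) y) (pt a b)
      = KB h a b * b + a * b * d1 (KB h) a b := by
    rw [pd_congr_nhds hev0 0,
      pd_eq ((hasFDerivAt_Rd_mul2 (cdq_KB hh) 0 2 hx.1 hx.2).fun_add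
        (hasFDerivAt_Rd_mul2 (cdq_KA hg) 1 3 hx.1 hx.2)) 0]
    simp only [ContinuousLinearMap.add_apply, ContinuousLinearMap.smul_apply,
      radCLM_apply, pr_apply, smul_eq_mul, hr1, hr2, pt_0, pt_1, pt_2, pt_3,
      bvec_00, bvec_01, bvec_02, bvec_03, Rd]
    field_simp
    ring
  -- term k = 1
  have hev1 : (fun y => pd 1 (fun z => saddleA g h z 3) y
      - pd 3 (fun z => saddleA g h z 1) y) =ᶠ[nhds (pt a b)]
      (fun y => Rd (KB h) y * (y 1 * y 2) - Rd (KA g) y * (y 0 * y 3)) := by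
    filter_upwards [U_open.mem_nhds hx] with y hy
    rw [pd_eq (hasFDerivAt_A3 g h hh hy) 1, pd_eq (hasFDerivAt_A1 g h hg hy) 3]
    simp only [ContinuousLinearMap.add_apply, ContinuousLinearMap.smul_apply,
      ContinuousLinearMap.neg_apply, radCLM_apply, pr_apply, smul_eq_mul,
      bvec_10, bvec_11, bvec_12, bvec_13, bvec_30, bvec_31, bvec_32, bvec_33, Rd]
    rw [← conv_KA hg hy.1 hy.2, ← conv_KB hh hy.1 hy.2]
    ring
  have T1 : pd 1 (fun y => pd 1 (fun z => saddleA g h z 3) y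
      - pd 3 (fun z => saddleA g h z 1) y) (pt a b) = KB h a b * b := by
    rw [pd_congr_nhds hev1 1,
      pd_eq ((hasFDerivAt_Rd_mul2 (cdq_KB hh) 1 2 hx.1 hx.2).fun_sub
        (hasFDerivAt_Rd_mul2 (cdq_KA hg) 0 3 hx.1 hx.2)) 1]
    simp only [ContinuousLinearMap.add_apply, ContinuousLinearMap.sub_apply,
      ContinuousLinearMap.smul_apply, radCLM_apply, pr_apply, smul_eq_mul,
      hr1, hr2, pt_0, pt_1, pt_2, pt_3, bvec_10, bvec_11, bvec_12, bvec_13, Rd]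
    field_simp
    ring
  -- term k = 2
  have hev2 : (fun y => pd 2 (fun z => saddleA g h z 3) y
      - pd 3 (fun z => saddleA g h z 2) y) =ᶠ[nhds (pt a b)] Rd (Kb h) := by
    filter_upwards [U_open.mem_nhds hx] with y hy
    rw [pd_eq (hasFDerivAt_A3 g h hh hy) 2, pd_eq (hasFDerivAt_A2 g h hh hy) 3]
    simp only [ContinuousLinearMap.add_apply, ContinuousLinearMap.smul_apply,
      ContinuousLinearMap.neg_apply, radCLM_apply, pr_apply, smul_eq_mul,
      bvec_20, bvec_21, bvec_22, bvec_23, bvec_30, bvec_31, bvec_32, bvec_33]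
    simp only [Rd]
    rw [← conv_Kb hh hy.1 hy.2]
    have hs := sq_r2 y
    have h2 : r2 y ≠ 0 := ne_of_gt hy.2
    field_simp
    linear_combination d2 (H1 h) (r1 y) (r2 y) * hs
  have T2 : pd 2 (fun y => pd 2 (fun z => saddleA g h z 3) y
      - pd 3 (fun z => saddleA g h z 2) y) (pt a b) = d2 (Kb h) a b := by
    rw [pd_congr_nhds hev2 2, pd_eq (hasFDerivAt_Rd (cdq_Kb hh) hx.1 hx.2) 2]
    simp only [radCLM_apply, hr1, hr2, pt_0, pt_1, pt_2, pt_3,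
      bvec_20, bvec_21, bvec_22, bvec_23]
    field_simp
    ring
  -- term k = 3
  have T3 : pd 3 (fun y => pd 3 (fun z => saddleA g h z 3) y
      - pd 3 (fun z => saddleA g h z 3) y) (pt a b) = 0 := by
    have h33 : (fun y => pd 3 (fun z => saddleA g h z 3) y
        - pd 3 (fun z => saddleA g h z 3) y) = (fun _ : R4 => (0 : ℝ)) :=
      funext fun y => sub_self _
    rw [h33]
    simp [pd]
  rw [T0, T1, T2, T3] at e
  -- right-hand side
  have hA3v : saddleA g h (pt a b) 3 = h a b / b ^ 2 * b := by
    have h' := congrFun (A_comp3 g h) (pt a b)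
    simp only at h'
    rw [h', Rd, hr1, hr2, pt_2, H1]
  have hpsi3 : pd 3 (saddlePsi f) (pt a b) = (Fl f a b : ℝ) • ((a : ℂ) * Complex.I) := by
    rw [pd_psi3 f hf hx]
    simp [Psi3, Rd, hr1, hr2, z1_pt]
  rw [hpsi3, hA3v, psi_pt f ha hb, Complex.conj_ofReal] at e
  simp only [Complex.real_smul, Complex.sub_im, Complex.mul_im, Complex.mul_re,
    Complex.ofReal_re, Complex.ofReal_im, Complex.I_re, Complex.I_im] at e
  rw [d2_Kb hh ha hb, d1_KB hh ha hb] at e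
  simp only [KB, Kb, Fl] at e
  linear_combination (norm := (field_simp; ring)) (-(b : ℝ)) * e

end GLred

namespace GLred

set_option maxHeartbeats 2000000 in
lemma eq_f (lam : ℝ) (f g h : ℝ → ℝ → ℝ) (hf : CDQ f) (hg : CDQ g) (hh : CDQ h)
    (heq1 : ∀ x : R4, x ∉ Pi1 ∪ Pi2 →
      -covLap (saddleA g h) (saddlePsi f) x
        + (((lam / 2 * (‖saddlePsi f x‖ ^ 2 - 1) : ℝ)) : ℂ) * saddlePsi f x = 0)
    {a b : ℝ} (ha : 0 < a) (hb : 0 < b) :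
    d1 (d1 f) a b + d2 (d2 f) a b + d1 f a b / a + d2 f a b / b
      - f a b * (1 - g a b) ^ 2 / a ^ 2 - f a b * (1 - h a b) ^ 2 / b ^ 2
      - lam / 2 * ((f a b) ^ 2 - 1) * f a b = 0 := by
  have hx : pt a b ∈ U := pt_mem_U ha hb
  have hr1 : r1 (pt a b) = a := r1_pt ha
  have hr2 : r2 (pt a b) = b := r2_pt hb
  have ha' : a ≠ 0 := ne_of_gt ha
  have hb' : b ≠ 0 := ne_of_gt hb
  have ha'' : (a : ℂ) ≠ 0 := by exact_mod_cast ha'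
  have hb'' : (b : ℂ) ≠ 0 := by exact_mod_cast hb'
  have e := heq1 (pt a b) ((mem_U_iff _).1 hx)
  rw [covLap, lap] at e
  simp only [Fin.sum_univ_four] at e
  -- second derivatives of psi
  have hev0 : pd 0 (saddlePsi f) =ᶠ[nhds (pt a b)] Psi0 f :=
    Filter.eventuallyEq_of_mem (U_open.mem_nhds hx) (fun y hy => pd_psi0 f hf hy)
  have hev1 : pd 1 (saddlePsi f) =ᶠ[nhds (pt a b)] Psi1 f :=
    Filter.eventuallyEq_of_mem (U_open.mem_nhds hx) (fun y hy => pd_psi1 f hf hy)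
  have hev2 : pd 2 (saddlePsi f) =ᶠ[nhds (pt a b)] Psi2 f :=
    Filter.eventuallyEq_of_mem (U_open.mem_nhds hx) (fun y hy => pd_psi2 f hf hy)
  have hev3 : pd 3 (saddlePsi f) =ᶠ[nhds (pt a b)] Psi3 f :=
    Filter.eventuallyEq_of_mem (U_open.mem_nhds hx) (fun y hy => pd_psi3 f hf hy)
  have LAP0 : pd 0 (pd 0 (saddlePsi f)) (pt a b)
      = ((d1 (Fl f) a b * b + K1 f a b * a * b
          + (K1 f a b + a * d1 (K1 f) a b) * (a * b) : ℝ) : ℂ) := by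
    rw [pd_congr_nhds hev0 0,
      show Psi0 f = (fun y => Rd (Fl f) y • z2 y + (Rd (K1 f) y * y 0) • W y) from rfl,
      pd_eq (((hasFDerivAt_Rd (cdq_Fl hf) hx.1 hx.2).fun_smul (hasFDerivAt_z2 _)).fun_add
        ((hasFDerivAt_Rd_mul (cdq_K1 hf) 0 hx.1 hx.2).fun_smul (hasFDerivAt_W _))) 0]
    simp only [ContinuousLinearMap.add_apply, ContinuousLinearMap.smul_apply,
      ContinuousLinearMap.smulRight_apply, radCLM_apply, pr_apply, CZ1_apply, CZ2_apply,
      smul_eq_mul, hr1, hr2, pt_0, pt_1, pt_2, pt_3, z1_pt, z2_pt, W_pt, Rd,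
      bvec_00, bvec_01, bvec_02, bvec_03]
    simp only [Complex.real_smul]
    push_cast
    field_simp
    ring
  have LAP1 : pd 1 (pd 1 (saddlePsi f)) (pt a b)
      = ((K1 f a b * (a * b) : ℝ) : ℂ) := by
    rw [pd_congr_nhds hev1 1,
      show Psi1 f = (fun y => Rd (Fl f) y • (z2 y * Complex.I) + (Rd (K1 f) y * y 1) • W y)
        from rfl,
      pd_eq (((hasFDerivAt_Rd (cdq_Fl hf) hx.1 hx.2).fun_smul
          ((hasFDerivAt_z2 _).mul_const Complex.I)).fun_add
        ((hasFDerivAt_Rd_mul (cdq_K1 hf) 1 hx.1 hx.2).fun_smul (hasFDerivAt_W _))) 1]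
    simp only [ContinuousLinearMap.add_apply, ContinuousLinearMap.smul_apply,
      ContinuousLinearMap.smulRight_apply, radCLM_apply, pr_apply, CZ1_apply, CZ2_apply,
      smul_eq_mul, hr1, hr2, pt_0, pt_1, pt_2, pt_3, z1_pt, z2_pt, W_pt, Rd,
      bvec_10, bvec_11, bvec_12, bvec_13]
    simp only [Complex.real_smul]
    push_cast
    field_simp
    ring
  have LAP2 : pd 2 (pd 2 (saddlePsi f)) (pt a b)
      = ((d2 (Fl f) a b * a + K2 f a b * b * a
          + (K2 f a b + b * d2 (K2 f) a b) * (a * b) : ℝ) : ℂ) := by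
    rw [pd_congr_nhds hev2 2,
      show Psi2 f = (fun y => Rd (Fl f) y • z1 y + (Rd (K2 f) y * y 2) • W y) from rfl,
      pd_eq (((hasFDerivAt_Rd (cdq_Fl hf) hx.1 hx.2).fun_smul (hasFDerivAt_z1 _)).fun_add
        ((hasFDerivAt_Rd_mul (cdq_K2 hf) 2 hx.1 hx.2).fun_smul (hasFDerivAt_W _))) 2]
    simp only [ContinuousLinearMap.add_apply, ContinuousLinearMap.smul_apply,
      ContinuousLinearMap.smulRight_apply, radCLM_apply, pr_apply, CZ1_apply, CZ2_apply,
      smul_eq_mul, hr1, hr2, pt_0, pt_1, pt_2, pt_3, z1_pt, z2_pt, W_pt, Rd,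
      bvec_20, bvec_21, bvec_22, bvec_23]
    simp only [Complex.real_smul]
    push_cast
    field_simp
    ring
  have LAP3 : pd 3 (pd 3 (saddlePsi f)) (pt a b)
      = ((K2 f a b * (a * b) : ℝ) : ℂ) := by
    rw [pd_congr_nhds hev3 3,
      show Psi3 f = (fun y => Rd (Fl f) y • (z1 y * Complex.I) + (Rd (K2 f) y * y 3) • W y)
        from rfl,
      pd_eq (((hasFDerivAt_Rd (cdq_Fl hf) hx.1 hx.2).fun_smul
          ((hasFDerivAt_z1 _).mul_const Complex.I)).fun_add
        ((hasFDerivAt_Rd_mul (cdq_K2 hf) 3 hx.1 hx.2).fun_smul (hasFDerivAt_W _))) 3]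
    simp only [ContinuousLinearMap.add_apply, ContinuousLinearMap.smul_apply,
      ContinuousLinearMap.smulRight_apply, radCLM_apply, pr_apply, CZ1_apply, CZ2_apply,
      smul_eq_mul, hr1, hr2, pt_0, pt_1, pt_2, pt_3, z1_pt, z2_pt, W_pt, Rd,
      bvec_30, bvec_31, bvec_32, bvec_33]
    simp only [Complex.real_smul]
    push_cast
    field_simp
    ring
  -- divergence terms vanish
  have D0 : pd 0 (fun y => saddleA g h y 0) (pt a b) = 0 := by
    rw [pd_eq (hasFDerivAt_A0 g h hg hx) 0]
    simp only [ContinuousLinearMap.neg_apply, ContinuousLinearMap.add_apply,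
      ContinuousLinearMap.smul_apply, radCLM_apply, pr_apply, smul_eq_mul,
      hr1, hr2, pt_0, pt_1, pt_2, pt_3, bvec_00, bvec_01, bvec_02, bvec_03]
    ring
  have D1 : pd 1 (fun y => saddleA g h y 1) (pt a b) = 0 := by
    rw [pd_eq (hasFDerivAt_A1 g h hg hx) 1]
    simp only [ContinuousLinearMap.add_apply, ContinuousLinearMap.smul_apply,
      radCLM_apply, pr_apply, smul_eq_mul,
      hr1, hr2, pt_0, pt_1, pt_2, pt_3, bvec_10, bvec_11, bvec_12, bvec_13]
    ring
  have D2 : pd 2 (fun y => saddleA g h y 2) (pt a b) = 0 := by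
    rw [pd_eq (hasFDerivAt_A2 g h hh hx) 2]
    simp only [ContinuousLinearMap.neg_apply, ContinuousLinearMap.add_apply,
      ContinuousLinearMap.smul_apply, radCLM_apply, pr_apply, smul_eq_mul,
      hr1, hr2, pt_0, pt_1, pt_2, pt_3, bvec_20, bvec_21, bvec_22, bvec_23]
    ring
  have D3 : pd 3 (fun y => saddleA g h y 3) (pt a b) = 0 := by
    rw [pd_eq (hasFDerivAt_A3 g h hh hx) 3]
    simp only [ContinuousLinearMap.add_apply, ContinuousLinearMap.smul_apply,
      radCLM_apply, pr_apply, smul_eq_mul,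
      hr1, hr2, pt_0, pt_1, pt_2, pt_3, bvec_30, bvec_31, bvec_32, bvec_33]
    ring
  -- values of A at the base point
  have hA0v : saddleA g h (pt a b) 0 = 0 := by
    have h' := congrFun (A_comp0 g h) (pt a b)
    simp only at h'
    rw [h', pt_1, mul_zero, neg_zero]
  have hA1v : saddleA g h (pt a b) 1 = g a b / a ^ 2 * a := by
    have h' := congrFun (A_comp1 g h) (pt a b)
    simp only at h'
    rw [h', Rd, hr1, hr2, pt_0, G1]
  have hA2v : saddleA g h (pt a b) 2 = 0 := by
    have h' := congrFun (A_comp2 g h) (pt a b)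
    simp only at h'
    rw [h', pt_3, mul_zero, neg_zero]
  have hA3v : saddleA g h (pt a b) 3 = h a b / b ^ 2 * b := by
    have h' := congrFun (A_comp3 g h) (pt a b)
    simp only at h'
    rw [h', Rd, hr1, hr2, pt_2, H1]
  -- first derivatives of psi at the base point
  have hp0 : pd 0 (saddlePsi f) (pt a b)
      = ((Fl f a b * b + K1 f a b * a * (a * b) : ℝ) : ℂ) := by
    rw [pd_psi0 f hf hx]
    simp only [Psi0, Rd, hr1, hr2, pt_0, z2_pt, W_pt, Complex.real_smul]
    push_cast
    ring
  have hp1 : pd 1 (saddlePsi f) (pt a b) = (Fl f a b : ℝ) • ((b : ℂ) * Complex.I) := by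
    rw [pd_psi1 f hf hx]
    simp [Psi1, Rd, hr1, hr2, z2_pt]
  have hp2 : pd 2 (saddlePsi f) (pt a b)
      = ((Fl f a b * a + K2 f a b * b * (a * b) : ℝ) : ℂ) := by
    rw [pd_psi2 f hf hx]
    simp only [Psi2, Rd, hr1, hr2, pt_2, z1_pt, W_pt, Complex.real_smul]
    push_cast
    ring
  have hp3 : pd 3 (saddlePsi f) (pt a b) = (Fl f a b : ℝ) • ((a : ℂ) * Complex.I) := by
    rw [pd_psi3 f hf hx]
    simp [Psi3, Rd, hr1, hr2, z1_pt]
  -- assemble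
  rw [LAP0, LAP1, LAP2, LAP3, D0, D1, D2, D3, hA0v, hA1v, hA2v, hA3v,
    hp0, hp1, hp2, hp3, psi_pt f ha hb] at e
  rw [Complex.norm_real, Real.norm_eq_abs] at e
  have habs : |f a b| ^ 2 = f a b ^ 2 := sq_abs _
  rw [habs] at e
  have e' := congrArg Complex.re e
  simp only [Complex.real_smul, Complex.add_re, Complex.neg_re, Complex.sub_re,
    Complex.mul_re, Complex.mul_im, Complex.add_im, Complex.neg_im, Complex.sub_im,
    Complex.ofReal_re, Complex.ofReal_im, Complex.I_re, Complex.I_im,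
    Complex.zero_re, Complex.zero_im, Complex.re_ofNat, Complex.im_ofNat] at e'
  rw [d1_Fl hf ha hb, d2_Fl hf ha hb, d1_K1 hf ha hb, d2_K2 hf ha hb] at e'
  simp only [K1, K2, Fl] at e'
  linear_combination (norm := (field_simp; ring)) -e'

end GLred
/-- If the saddle ansatz solves the magnetic Ginzburg–Landau system away from
Π₁ ∪ Π₂, then (f, g, h) satisfies the reduced system on (0,∞)². -/
theorem saddle_ansatz_reduction (lam : ℝ) (hlam : 0 < lam) (f g h : ℝ → ℝ → ℝ)
    (hf : ContDiffOn ℝ (⊤ : ℕ∞) (Function.uncurry f) (Set.Ioi 0 ×ˢ Set.Ioi 0))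
    (hg : ContDiffOn ℝ (⊤ : ℕ∞) (Function.uncurry g) (Set.Ioi 0 ×ˢ Set.Ioi 0))
    (hh : ContDiffOn ℝ (⊤ : ℕ∞) (Function.uncurry h) (Set.Ioi 0 ×ˢ Set.Ioi 0))
    (heq1 : ∀ x : R4, x ∉ Pi1 ∪ Pi2 →
      -covLap (saddleA g h) (saddlePsi f) x
        + (((lam / 2 * (‖saddlePsi f x‖ ^ 2 - 1) : ℝ)) : ℂ) * saddlePsi f x = 0)
    (heq2 : ∀ x : R4, x ∉ Pi1 ∪ Pi2 → ∀ j : Fin 4,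
      dStarDA (saddleA g h) j x =
        ((pd j (saddlePsi f) x - Complex.I * (↑(saddleA g h x j)) * saddlePsi f x)
          * (starRingEnd ℂ) (saddlePsi f x)).im) :
    ∀ a b : ℝ, 0 < a → 0 < b →
      (d1 (d1 f) a b + d2 (d2 f) a b + d1 f a b / a + d2 f a b / b
        - f a b * (1 - g a b) ^ 2 / a ^ 2 - f a b * (1 - h a b) ^ 2 / b ^ 2
        - lam / 2 * ((f a b) ^ 2 - 1) * f a b = 0) ∧
      (d1 (d1 g) a b + d2 (d2 g) a b - d1 g a b / a + d2 g a b / b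
        + (f a b) ^ 2 - (f a b) ^ 2 * g a b = 0) ∧
      (d1 (d1 h) a b + d2 (d2 h) a b + d1 h a b / a - d2 h a b / b
        + (f a b) ^ 2 - (f a b) ^ 2 * h a b = 0) := by
  intro a b ha hb
  exact ⟨GLred.eq_f lam f g h hf hg hh heq1 ha hb,
    GLred.eq_g f g h hf hg hh heq2 ha hb,
    GLred.eq_h f g h hf hg hh heq2 ha hb⟩

end
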